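/- Let F be a set of unary FDs over schema R (each FD has a single attribute on each side, obtained by splitting right-hand sides), and suppose every uncertain attribute of R is either a sink (its closure under F is itself) or F-equivalent to some certain attribute. Define, for each uncertain non-sink attribute ?A, a certain attribute c(?A) equivalent to it, and let F' be obtained from F by replacing every occurrence of each such ?A by c(?A). Then F is logically equivalent (satisfied by exactly the same relations over R) to F' ∪ ⋃_{?A non-sink uncertain} {?A → c(?A), c(?A) → ?A}. -/
import Mathlib


/-- The closure of a set `S` of attributes under a set `F` of unary FDs:
`b ∈ UCl F S` iff `F` implies `S → b`. -/
def UCl {Att : Type} (F : Finset (Att × Att)) (S : Set Att) : Set Att :=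
  ⋂₀ {T : Set Att | S ⊆ T ∧ ∀ fd ∈ F, fd.1 ∈ T → fd.2 ∈ T}

lemma subset_UCl {Att : Type} (F : Finset (Att × Att)) (S : Set Att) : S ⊆ UCl F S := by
  intro x hx T hT; exact hT.1 hx

lemma UCl_closed {Att : Type} (F : Finset (Att × Att)) (S : Set Att) :
    ∀ fd ∈ F, fd.1 ∈ UCl F S → fd.2 ∈ UCl F S := by
  intro fd hfd h1 T hT
  exact hT.2 fd hfd (h1 T hT)

lemma UCl_min {Att : Type} (F : Finset (Att × Att)) (S T : Set Att)
    (h1 : S ⊆ T) (h2 : ∀ fd ∈ F, fd.1 ∈ T → fd.2 ∈ T) : UCl F S ⊆ T := by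
  intro x hx; exact hx T ⟨h1, h2⟩

lemma UCl_trans {Att : Type} (F : Finset (Att × Att)) (S : Set Att) (c : Att)
    (hc : c ∈ UCl F S) : UCl F {c} ⊆ UCl F S :=
  UCl_min F {c} (UCl F S) (by simpa using hc) (UCl_closed F S)

lemma sat_implies {Att ι V : Type} (F : Finset (Att × Att)) (r : ι → Att → V)
    (hsat : ∀ fd ∈ F, ∀ i j : ι, r i fd.1 = r j fd.1 → r i fd.2 = r j fd.2)
    {a b : Att} (hb : b ∈ UCl F {a}) (i j : ι) (hab : r i a = r j a) :
    r i b = r j b := by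
  have := UCl_min F {a} {x | r i x = r j x} (by simpa using hab)
    (fun fd hfd h1 => hsat fd hfd i j h1)
  exact this hb

/-- Let `F` be a set of unary FDs over a schema in which every uncertain
attribute is either a sink or `F`-equivalent to a certain attribute.  Choose, via `ρ`, for each
uncertain non-sink attribute an equivalent certain attribute (`ρ` is the identity on all other
attributes).  Let `F'` be `F` with every attribute replaced by its `ρ`-image.  Then `F` is
logically equivalent (satisfied by exactly the same relations) to
`F' ∪ ⋃_{?A uncertain non-sink} {?A → ρ(?A), ρ(?A) → ?A}`. -/
theorem stmt11 {Att : Type} [DecidableEq Att]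
    (Certain : Att → Prop)
    (F : Finset (Att × Att)) (ρ : Att → Att)
    (hρcert : ∀ a, Certain a → ρ a = a)
    (hρsink : ∀ a, ¬ Certain a → UCl F {a} = {a} → ρ a = a)
    (hρns : ∀ a, ¬ Certain a → UCl F {a} ≠ {a} →
      Certain (ρ a) ∧ UCl F {ρ a} = UCl F {a}) :
    ∀ (ι V : Type) (r : ι → Att → V),
      (∀ fd ∈ F, ∀ i j : ι, r i fd.1 = r j fd.1 → r i fd.2 = r j fd.2)
        ↔ ((∀ fd ∈ F.image (fun fd => (ρ fd.1, ρ fd.2)), ∀ i j : ι,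
              r i fd.1 = r j fd.1 → r i fd.2 = r j fd.2)
            ∧ ∀ a : Att, ¬ Certain a → UCl F {a} ≠ {a} →
                ∀ i j : ι, (r i a = r j a ↔ r i (ρ a) = r j (ρ a))) := by
  -- Key: for every a, UCl F {ρ a} = UCl F {a}
  have hUCl : ∀ a, UCl F {ρ a} = UCl F {a} := by
    intro a
    by_cases hc : Certain a
    · rw [hρcert a hc]
    · by_cases hs : UCl F {a} = {a}
      · rw [hρsink a hc hs]
      · exact (hρns a hc hs).2
  intro ι V r
  constructor
  · intro hsat
    constructor
    · intro fd hfd i j hij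
      simp only [Finset.mem_image] at hfd
      obtain ⟨⟨b, c⟩, hbc, rfl⟩ := hfd
      -- ρ c ∈ UCl F {ρ b}
      have hc1 : c ∈ UCl F {b} :=
        UCl_closed F {b} (b, c) hbc (subset_UCl F {b} rfl)
      have hc2 : c ∈ UCl F {ρ b} := by rw [hUCl b]; exact hc1
      have hc3 : ρ c ∈ UCl F {ρ b} := by
        have : ρ c ∈ UCl F {c} := by
          rw [← hUCl c]; exact subset_UCl F {ρ c} rfl
        exact UCl_trans F {ρ b} c hc2 this
      exact sat_implies F r hsat hc3 i j hij
    · intro a _ _ i j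
      constructor
      · intro h
        have : ρ a ∈ UCl F {a} := by
          rw [← hUCl a]; exact subset_UCl F {ρ a} rfl
        exact sat_implies F r hsat this i j h
      · intro h
        have : a ∈ UCl F {ρ a} := by
          rw [hUCl a]; exact subset_UCl F {a} rfl
        exact sat_implies F r hsat this i j h
  · rintro ⟨hsat', heq⟩
    -- first: ∀ a i j, r i a = r j a ↔ r i (ρ a) = r j (ρ a)
    have key : ∀ a (i j : ι), r i a = r j a ↔ r i (ρ a) = r j (ρ a) := by
      intro a i j
      by_cases hc : Certain a
      · rw [hρcert a hc]
      · by_cases hs : UCl F {a} = {a}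
        · rw [hρsink a hc hs]
        · exact heq a hc hs i j
    rintro ⟨b, c⟩ hbc i j hij
    have h1 : r i (ρ b) = r j (ρ b) := (key b i j).mp hij
    have h2 : r i (ρ c) = r j (ρ c) :=
      hsat' (ρ b, ρ c) (Finset.mem_image.mpr ⟨(b, c), hbc, rfl⟩) i j h1
    exact (key c i j).mpr h2
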